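/- Let L be the Laplacian of a weighted directed graph on N nodes and let D = diag(ι_1,...,ι_N) with ι_i ∈ {0,1} and at least one ι_i = 1. If every node of the graph is reachable by a directed path from the set {i : ι_i = 1}, then every eigenvalue of the expanded Laplacian L̄ = L + D has strictly positive real part; in particular L̄ is invertible. -/

import Mathlib

open Matrix

theorem expanded_laplacian_spectrum_pos {N : ℕ} (a : Fin N → Fin N → ℝ)
    (ha : ∀ i j, 0 ≤ a i j) (hdiag : ∀ i, a i i = 0)
    (L : Matrix (Fin N) (Fin N) ℝ)
    (hL : ∀ i j, L i j = if i = j then ∑ k, a i k else -(a i j))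
    (iota : Fin N → ℝ) (hiota : ∀ i, iota i = 0 ∨ iota i = 1)
    (hroot : ∃ i, iota i = 1)
    -- every node is reachable by a directed path from the root set
    -- (an edge from node p to node q exists when a q p > 0)
    (hreach : ∀ j : Fin N, ∃ c : Fin N, iota c = 1 ∧
      Relation.ReflTransGen (fun p q => 0 < a q p) c j) :
    (∀ lam ∈ spectrum ℂ ((L + Matrix.diagonal iota).map Complex.ofReal), 0 < lam.re)
      ∧ IsUnit (L + Matrix.diagonal iota) := by
  set Mc := (L + Matrix.diagonal iota).map Complex.ofReal with hMc
  have key : ∀ (lam : ℂ) (v : Fin N → ℂ), Mc *ᵥ v = lam • v → lam.re ≤ 0 → v = 0 := by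
    intro lam v hv hre
    by_contra hv0
    -- row equation
    have hrow : ∀ i, (((∑ k, a i k : ℝ) : ℂ) + (iota i : ℂ) - lam) * v i
        = ∑ j, (a i j : ℂ) * v j := by
      intro i
      have h1 : ∑ j, (Mc i j) * v j = lam * v i := by
        have := congrFun hv i
        simpa [Matrix.mulVec, dotProduct, Pi.smul_apply, smul_eq_mul,
          mul_comm] using this
      have h2 : ∀ j, Mc i j
          = (if i = j then (((∑ k, a i k : ℝ) : ℂ) + (iota i : ℂ)) else 0)
            - (a i j : ℂ) := by
        intro j
        by_cases hij : i = j
        · subst hij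
          simp [hMc, Matrix.map_apply, hL, Matrix.diagonal_apply_eq, hdiag]
        · simp [hMc, Matrix.map_apply, hL, hij, Matrix.diagonal_apply_ne' _ (Ne.symm hij)]
      have h3 : ∑ j, (Mc i j) * v j
          = (((∑ k, a i k : ℝ) : ℂ) + (iota i : ℂ)) * v i - ∑ j, (a i j : ℂ) * v j := by
        simp only [h2, sub_mul, Finset.sum_sub_distrib]
        congr 1
        rw [Finset.sum_eq_single i]
        · simp
        · intro b _ hb; simp [Ne.symm hb]
        · simp
      rw [h3] at h1
      linear_combination h1
    -- maximal modulus node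
    have hne : Nonempty (Fin N) := ⟨hroot.choose⟩
    obtain ⟨i0, hi0max⟩ := Finite.exists_max (fun j => ‖v j‖)
    set M := ‖v i0‖ with hM
    have hMpos : 0 < M := by
      obtain ⟨j, hj⟩ := Function.ne_iff.1 hv0
      exact lt_of_lt_of_le (by simpa using hj) (hi0max j)
    -- Gershgorin-type bound at any maximal node
    have bound : ∀ p, ‖v p‖ = M →
        ‖(((∑ k, a p k : ℝ) : ℂ) + (iota p : ℂ)) - lam‖ ≤ ∑ k, a p k := by
      intro p hp
      have h1 : ‖((((∑ k, a p k : ℝ) : ℂ) + (iota p : ℂ)) - lam) * v p‖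
          ≤ (∑ k, a p k) * M := by
        rw [hrow p]
        calc ‖∑ j, (a p j : ℂ) * v j‖
            ≤ ∑ j, ‖(a p j : ℂ) * v j‖ := norm_sum_le _ _
          _ ≤ ∑ j, a p j * M := by
              refine Finset.sum_le_sum fun j _ => ?_
              rw [norm_mul, Complex.norm_real, Real.norm_eq_abs, abs_of_nonneg (ha p j)]
              exact mul_le_mul_of_nonneg_left (hi0max j) (ha p j)
          _ = (∑ k, a p k) * M := by rw [Finset.sum_mul]
      rw [norm_mul, hp] at h1
      exact le_of_mul_le_mul_right h1 hMpos
    -- at any maximal node, iota p ≤ lam.re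
    have iota_le : ∀ p, ‖v p‖ = M → iota p ≤ lam.re := by
      intro p hp
      have h1 := bound p hp
      have h2 : ((((∑ k, a p k : ℝ) : ℂ) + (iota p : ℂ)) - lam).re
          ≤ ‖(((∑ k, a p k : ℝ) : ℂ) + (iota p : ℂ)) - lam‖ :=
        Complex.re_le_norm _
      simp only [Complex.sub_re, Complex.add_re, Complex.ofReal_re] at h2
      linarith
    have hiota0 : iota i0 = 0 := by
      rcases hiota i0 with h | h
      · exact h
      · exfalso; have := iota_le i0 rfl; rw [h] at this; linarith
    have hre0 : lam.re = 0 := by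
      have h1 := iota_le i0 rfl
      rw [hiota0] at h1; linarith
    -- lam = 0
    have hlam0 : lam = 0 := by
      have h1 := bound i0 rfl
      rw [hiota0] at h1
      simp only [Complex.ofReal_zero, add_zero] at h1
      have h2 : ‖((∑ k, a i0 k : ℝ) : ℂ) - lam‖ ^ 2 ≤ (∑ k, a i0 k) ^ 2 := by
        have hnn : (0:ℝ) ≤ ∑ k, a i0 k := Finset.sum_nonneg fun k _ => ha i0 k
        nlinarith [norm_nonneg (((∑ k, a i0 k : ℝ) : ℂ) - lam)]
      rw [Complex.sq_norm, Complex.normSq_apply] at h2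
      simp only [Complex.sub_re, Complex.sub_im, Complex.ofReal_re, Complex.ofReal_im,
        hre0, sub_zero, zero_sub] at h2
      have him : lam.im = 0 := by nlinarith [sq_nonneg lam.im]
      exact Complex.ext hre0 him
    -- equality case: at maximal node p, neighbors have equal value
    have stepB : ∀ p, ‖v p‖ = M → ∀ j, 0 < a p j → v j = v p := by
      intro p hp
      have hiotap : iota p = 0 := by
        rcases hiota p with h | h
        · exact h
        · exfalso; have := iota_le p hp; rw [h, hre0] at this; linarith
      have hrowp : ((∑ k, a p k : ℝ) : ℂ) * v p = ∑ j, (a p j : ℂ) * v j := by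
        have := hrow p
        rw [hiotap, hlam0] at this
        simpa using this
      have hterm_nonneg : ∀ j ∈ Finset.univ, 0 ≤ a p j * Complex.normSq (v j - v p) :=
        fun j _ => mul_nonneg (ha p j) (Complex.normSq_nonneg _)
      have hsum0 : ∑ j, a p j * Complex.normSq (v j - v p) = 0 := by
        have hexp : ∑ j, a p j * Complex.normSq (v j - v p)
            = (∑ j, a p j * Complex.normSq (v j))
              + (∑ k, a p k) * Complex.normSq (v p)
              - 2 * ((∑ j, (a p j : ℂ) * v j) * (starRingEnd ℂ) (v p)).re := by
          have : ∀ j, a p j * Complex.normSq (v j - v p)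
              = a p j * Complex.normSq (v j) + a p j * Complex.normSq (v p)
                - 2 * (((a p j : ℂ) * v j) * (starRingEnd ℂ) (v p)).re := by
            intro j
            rw [Complex.normSq_sub]
            have : (((a p j : ℂ) * v j) * (starRingEnd ℂ) (v p)).re
                = a p j * ((v j) * (starRingEnd ℂ) (v p)).re := by
              rw [mul_assoc]
              simp [Complex.mul_re, Complex.ofReal_re, Complex.ofReal_im]
            rw [this]; ring
          rw [Finset.sum_congr rfl (fun j _ => this j)]
          rw [Finset.sum_sub_distrib, Finset.sum_add_distrib, ← Finset.sum_mul,
            ← Finset.mul_sum]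
          congr 2
          rw [Finset.sum_mul, Complex.re_sum]
        have hre_eq : ((∑ j, (a p j : ℂ) * v j) * (starRingEnd ℂ) (v p)).re
            = (∑ k, a p k) * Complex.normSq (v p) := by
          rw [← hrowp, mul_assoc, Complex.mul_conj, ← Complex.ofReal_mul, Complex.ofReal_re]
        rw [hre_eq] at hexp
        have hle : ∑ j, a p j * Complex.normSq (v j) ≤ (∑ k, a p k) * Complex.normSq (v p) := by
          rw [Finset.sum_mul]
          refine Finset.sum_le_sum fun j _ => ?_
          refine mul_le_mul_of_nonneg_left ?_ (ha p j)
          rw [← Complex.sq_norm, ← Complex.sq_norm, hp]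
          exact pow_le_pow_left₀ (norm_nonneg _) (hi0max j) 2
        have hge : 0 ≤ ∑ j, a p j * Complex.normSq (v j - v p) :=
          Finset.sum_nonneg hterm_nonneg
        rw [hexp] at hge ⊢
        linarith
      intro j hj
      have := (Finset.sum_eq_zero_iff_of_nonneg hterm_nonneg).1 hsum0 j (Finset.mem_univ j)
      have hns : Complex.normSq (v j - v p) = 0 := by
        rcases mul_eq_zero.1 this with h | h
        · exact absurd h (ne_of_gt hj)
        · exact h
      have := Complex.normSq_eq_zero.1 hns
      exact sub_eq_zero.1 this
    -- propagate along the path from the root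
    obtain ⟨c, hc1, hpath⟩ := hreach i0
    have hprop : ∀ x, Relation.ReflTransGen (fun p q => 0 < a q p) x i0 → v x = v i0 := by
      intro x hx
      induction hx using Relation.ReflTransGen.head_induction_on with
      | refl => rfl
      | head hxy _ ih =>
        rename_i x' y' _
        have hy : ‖v y'‖ = M := by rw [ih]
        have := stepB y' hy x' hxy
        rw [this, ih]
    have hvc : v c = v i0 := hprop c hpath
    have hcmax : ‖v c‖ = M := by rw [hvc]
    have := iota_le c hcmax
    rw [hc1, hre0] at this
    linarith
  constructor
  · intro lam hlam
    by_contra hpos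
    push_neg at hpos
    have hnu : ¬ IsUnit (algebraMap ℂ (Matrix (Fin N) (Fin N) ℂ) lam - Mc) :=
      spectrum.mem_iff.1 hlam
    rw [Algebra.algebraMap_eq_smul_one] at hnu
    have hdet : (lam • (1 : Matrix (Fin N) (Fin N) ℂ) - Mc).det = 0 := by
      rw [Matrix.isUnit_iff_isUnit_det, isUnit_iff_ne_zero, not_not] at hnu
      exact hnu
    obtain ⟨w, hw0, hw⟩ := (Matrix.exists_mulVec_eq_zero_iff).2 hdet
    have hMw : Mc *ᵥ w = lam • w := by
      have h1 : (lam • (1 : Matrix (Fin N) (Fin N) ℂ) - Mc) *ᵥ w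
          = lam • w - Mc *ᵥ w := by
        rw [Matrix.sub_mulVec, Matrix.smul_mulVec, Matrix.one_mulVec]
      rw [hw] at h1
      have := sub_eq_zero.1 h1.symm
      exact this.symm
    exact hw0 (key lam w hMw hpos)
  · rw [Matrix.isUnit_iff_isUnit_det, isUnit_iff_ne_zero]
    intro hdet
    have hdetC : Mc.det = 0 := by
      rw [hMc]
      have : ((L + Matrix.diagonal iota).map Complex.ofReal).det
          = Complex.ofRealHom ((L + Matrix.diagonal iota).det) :=
        (RingHom.map_det Complex.ofRealHom _).symm
      rw [this, hdet]
      simp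
    obtain ⟨w, hw0, hw⟩ := (Matrix.exists_mulVec_eq_zero_iff).2 hdetC
    have hMw : Mc *ᵥ w = (0 : ℂ) • w := by simpa using hw
    exact hw0 (key 0 w hMw (by norm_num))
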